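/- Let F ⊆ 2^E with |E| = p^t a prime power, suppose a group G of permutations of E acting transitively on E leaves F invariant, and suppose ∅ ∈ F but E ∉ F. Then F is evasive, i.e., its decision-tree complexity equals |E|. -/

import Mathlib

open Finset

/-- A binary decision tree: leaves hold answers, internal nodes query an element
(left subtree = answer NO, right subtree = answer YES). -/
inductive DTree (α : Type*) where
  | leaf : Bool → DTree α
  | node : α → DTree α → DTree α → DTree α

/-- Evaluate a decision tree on an input set (given by its characteristic function). -/
def DTree.eval {α : Type*} : DTree α → (α → Bool) → Bool
  | .leaf b, _ => b
  | .node e t0 t1, A => if A e then t1.eval A else t0.eval A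

/-- The depth (worst-case number of queries) of a decision tree. -/
def DTree.depth {α : Type*} : DTree α → ℕ
  | .leaf _ => 0
  | .node _ t0 t1 => max t0.depth t1.depth + 1

/-- The tree `T` decides membership in the set system `F`. -/
def Decides {α : Type*} [DecidableEq α] (F : Finset (Finset α)) (T : DTree α) : Prop :=
  ∀ A : Finset α, T.eval (fun e => decide (e ∈ A)) = decide (A ∈ F)

/-- The decision-tree (argument) complexity `c(F)` of a set system `F`. -/
noncomputable def dtComplexity (α : Type*) [DecidableEq α] (F : Finset (Finset α)) : ℕ :=
  sInf {d | ∃ T : DTree α, Decides F T ∧ T.depth = d}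

/-- Parity lemma: a shallow tree has vanishing alternating sum over a subcube. -/
lemma RV.parity {α : Type*} [DecidableEq α] (T : DTree α) :
    ∀ (S A₀ : Finset α), Disjoint A₀ S → T.depth < S.card →
      ∑ A ∈ S.powerset, (-1 : ℤ) ^ A.card *
        (if T.eval (fun e => decide (e ∈ A₀ ∪ A)) then 1 else 0) = 0 := by
  induction T with
  | leaf b =>
    intro S A₀ _ hd
    have hS : S.Nonempty := card_pos.mp (Nat.lt_of_le_of_lt (Nat.zero_le _) hd)
    simp only [DTree.eval]
    cases b <;>
      simp [Finset.sum_powerset_neg_one_pow_card_of_nonempty hS]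
  | node e t0 t1 ih0 ih1 =>
    intro S A₀ hdisj hd
    simp only [DTree.depth] at hd
    have hd0 : t0.depth + 1 ≤ S.card := by omega
    have hd1 : t1.depth + 1 ≤ S.card := by omega
    by_cases he : e ∈ S
    · -- split on e
      have heA₀ : e ∉ A₀ := fun h => Finset.disjoint_left.mp hdisj h he
      have hS : S = insert e (S.erase e) := (insert_erase he).symm
      have heS' : e ∉ S.erase e := notMem_erase _ _
      have hcard : (S.erase e).card = S.card - 1 := card_erase_of_mem he
      rw [hS, Finset.sum_powerset_insert heS']
      have h1 : ∑ A ∈ (S.erase e).powerset, (-1 : ℤ) ^ A.card *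
          (if (DTree.node e t0 t1).eval (fun x => decide (x ∈ A₀ ∪ A)) then 1 else 0) = 0 := by
        have : ∀ A ∈ (S.erase e).powerset, (-1 : ℤ) ^ A.card *
            (if (DTree.node e t0 t1).eval (fun x => decide (x ∈ A₀ ∪ A)) then 1 else 0)
            = (-1 : ℤ) ^ A.card *
            (if t0.eval (fun x => decide (x ∈ A₀ ∪ A)) then 1 else 0) := by
          intro A hA
          have heA : e ∉ A := fun h => heS' (mem_powerset.mp hA h)
          have : e ∉ A₀ ∪ A := by simp [heA₀, heA]
          simp [DTree.eval, this]
        rw [Finset.sum_congr rfl this]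
        refine ih0 _ _ (hdisj.mono_right (erase_subset _ _)) ?_
        omega
      have h2 : ∑ A ∈ (S.erase e).powerset, (-1 : ℤ) ^ (insert e A).card *
          (if (DTree.node e t0 t1).eval (fun x => decide (x ∈ A₀ ∪ insert e A)) then 1 else 0)
          = 0 := by
        have : ∀ A ∈ (S.erase e).powerset, (-1 : ℤ) ^ (insert e A).card *
            (if (DTree.node e t0 t1).eval (fun x => decide (x ∈ A₀ ∪ insert e A)) then 1 else 0)
            = (-1) * ((-1 : ℤ) ^ A.card *
            (if t1.eval (fun x => decide (x ∈ (insert e A₀) ∪ A)) then 1 else 0)) := by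
          intro A hA
          have heA : e ∉ A := fun h => heS' (mem_powerset.mp hA h)
          have hc : (insert e A).card = A.card + 1 := card_insert_of_notMem heA
          have hset : A₀ ∪ insert e A = (insert e A₀) ∪ A := by
            ext x; simp [or_comm, or_assoc, or_left_comm]
          have hevals : (DTree.node e t0 t1).eval (fun x => decide (x ∈ A₀ ∪ insert e A))
              = t1.eval (fun x => decide (x ∈ insert e A₀ ∪ A)) := by
            simp only [DTree.eval]
            rw [if_pos (by simp : decide (e ∈ A₀ ∪ insert e A) = true)]
            congr 1
            funext x
            rw [hset]
          rw [hevals, hc, pow_succ]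
          ring
        rw [Finset.sum_congr rfl this, ← Finset.mul_sum]
        have hdisj' : Disjoint (insert e A₀) (S.erase e) := by
          rw [disjoint_insert_left]
          exact ⟨heS', hdisj.mono_right (erase_subset _ _)⟩
        rw [ih1 _ _ hdisj' (by omega), mul_zero]
      rw [h1, h2, add_zero]
    · -- e not in S: branch is constant
      have key : ∀ A ∈ S.powerset, (-1 : ℤ) ^ A.card *
          (if (DTree.node e t0 t1).eval (fun x => decide (x ∈ A₀ ∪ A)) then 1 else 0)
          = (-1 : ℤ) ^ A.card *
          (if (if e ∈ A₀ then t1 else t0).eval (fun x => decide (x ∈ A₀ ∪ A)) then 1 else 0) := by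
        intro A hA
        have heA : e ∉ A := fun h => he (mem_powerset.mp hA h)
        by_cases he0 : e ∈ A₀
        · have : e ∈ A₀ ∪ A := by simp [he0]
          simp [DTree.eval, this, he0]
        · have : e ∉ A₀ ∪ A := by simp [he0, heA]
          simp [DTree.eval, this, he0]
      rw [Finset.sum_congr rfl key]
      by_cases he0 : e ∈ A₀
      · simp only [he0, if_true]; exact ih1 _ _ hdisj (by omega)
      · simp only [he0, if_false]; exact ih0 _ _ hdisj (by omega)

/-- The exhaustive decision tree. -/
def RV.fullTree {α : Type*} [DecidableEq α] (F : Finset (Finset α)) :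
    List α → Finset α → DTree α
  | [], acc => .leaf (decide (acc ∈ F))
  | e :: l, acc => .node e (RV.fullTree F l acc) (RV.fullTree F l (insert e acc))

lemma RV.fullTree_depth {α : Type*} [DecidableEq α] (F : Finset (Finset α)) :
    ∀ (l : List α) (acc : Finset α), (RV.fullTree F l acc).depth = l.length := by
  intro l
  induction l with
  | nil => intro acc; rfl
  | cons e l ih => intro acc; simp [RV.fullTree, DTree.depth, ih]

lemma RV.fullTree_eval {α : Type*} [DecidableEq α] (F : Finset (Finset α)) :
    ∀ (l : List α) (acc A : Finset α),
      (RV.fullTree F l acc).eval (fun e => decide (e ∈ A))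
        = decide ((acc ∪ A.filter (· ∈ l)) ∈ F) := by
  intro l
  induction l with
  | nil => intro acc A; simp [RV.fullTree, DTree.eval]
  | cons e l ih =>
    intro acc A
    by_cases heA : e ∈ A
    · have hset : insert e acc ∪ A.filter (· ∈ l) = acc ∪ A.filter (· ∈ e :: l) := by
        ext x
        simp only [mem_union, mem_insert, mem_filter, List.mem_cons]
        constructor
        · rintro ((rfl | h) | ⟨h1, h2⟩)
          · exact Or.inr ⟨heA, Or.inl rfl⟩
          · exact Or.inl h
          · exact Or.inr ⟨h1, Or.inr h2⟩
        · rintro (h | ⟨h1, rfl | h2⟩)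
          · exact Or.inl (Or.inr h)
          · exact Or.inl (Or.inl rfl)
          · exact Or.inr ⟨h1, h2⟩
      simp only [RV.fullTree, DTree.eval, heA, decide_true, if_true, ih, hset]
    · have hset : acc ∪ A.filter (· ∈ l) = acc ∪ A.filter (· ∈ e :: l) := by
        ext x
        simp only [mem_union, mem_filter, List.mem_cons]
        constructor
        · rintro (h | ⟨h1, h2⟩)
          · exact Or.inl h
          · exact Or.inr ⟨h1, Or.inr h2⟩
        · rintro (h | ⟨h1, rfl | h2⟩)
          · exact Or.inl h
          · exact absurd h1 heA
          · exact Or.inr ⟨h1, h2⟩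
      simp only [RV.fullTree, DTree.eval, heA, decide_false, Bool.false_eq_true,
        if_false, ih, hset]

/-- **Rivest–Vuillemin.** Let `F ⊆ 2^E` with `|E|` a prime power, invariant under
a group of permutations of `E` acting transitively on `E`, with `∅ ∈ F` and
`E ∉ F`. Then `F` is evasive: its decision-tree complexity equals `|E|`. -/
theorem rivest_vuillemin (α : Type*) [Fintype α] [DecidableEq α]
    (hpp : ∃ p t : ℕ, p.Prime ∧ Fintype.card α = p ^ t)
    (G : Subgroup (Equiv.Perm α))
    (htrans : ∀ a b : α, ∃ g ∈ G, g a = b)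
    (F : Finset (Finset α))
    (hinv : ∀ g ∈ G, ∀ A ∈ F, A.image g ∈ F)
    (h0 : (∅ : Finset α) ∈ F) (hu : Finset.univ ∉ F) :
    dtComplexity α F = Fintype.card α := by
  classical
  obtain ⟨p, t, hp, hcard⟩ := hpp
  set n := Fintype.card α with hn
  have hn1 : 1 ≤ n := by
    rw [hcard]; exact Nat.one_le_pow _ _ hp.pos
  have hne : Nonempty α := Fintype.card_pos_iff.mp hn1
  obtain ⟨e₀⟩ := hne
  -- divisibility of middle layers
  have hdvd : ∀ k, 0 < k → k < n → p ∣ (F.filter (fun A => A.card = k)).card := by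
    intro k hk0 hkn
    set Fk := F.filter (fun A => A.card = k) with hFk
    -- counts are equal at every point
    have hsame : ∀ e : α, (Fk.filter (fun A => e ∈ A)).card
        = (Fk.filter (fun A => e₀ ∈ A)).card := by
      intro e
      obtain ⟨g, hg, hge⟩ := htrans e e₀
      have hsymm : ∀ B ∈ F, B.image g.symm ∈ F := by
        intro B hB
        have := hinv g⁻¹ (G.inv_mem hg) B hB
        simpa using this
      refine Finset.card_bij' (fun A _ => A.image g) (fun B _ => B.image g.symm) ?_ ?_ ?_ ?_
      · intro A hA
        simp only [hFk, mem_filter] at hA ⊢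
        refine ⟨⟨hinv g hg A hA.1.1, ?_⟩, ?_⟩
        · rw [Finset.card_image_of_injective _ (Equiv.injective g)]; exact hA.1.2
        · rw [Finset.mem_image]; exact ⟨e, hA.2, hge⟩
      · intro B hB
        simp only [hFk, mem_filter] at hB ⊢
        refine ⟨⟨hsymm B hB.1.1, ?_⟩, ?_⟩
        · rw [Finset.card_image_of_injective _ (Equiv.injective g.symm)]; exact hB.1.2
        · rw [Finset.mem_image]
          refine ⟨e₀, hB.2, ?_⟩
          rw [← hge]; simp
      · intro A _
        show (A.image ⇑g).image ⇑g.symm = A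
        rw [Finset.image_image]
        ext x
        simp
      · intro B _
        show (B.image ⇑g.symm).image ⇑g = B
        rw [Finset.image_image]
        ext x
        simp
    -- double counting
    have hdc : Fk.card * k = n * (Fk.filter (fun A => e₀ ∈ A)).card := by
      have h1 : ∑ A ∈ Fk, A.card = Fk.card * k := by
        rw [Finset.sum_congr rfl (fun A hA => (Finset.mem_filter.mp hA).2),
          Finset.sum_const, smul_eq_mul]
      have h2 : ∑ A ∈ Fk, A.card = ∑ e : α, (Fk.filter (fun A => e ∈ A)).card := by
        have step : ∀ A ∈ Fk, A.card = ∑ e : α, if e ∈ A then 1 else 0 := by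
          intro A _
          rw [Finset.sum_ite_mem, Finset.univ_inter, Finset.card_eq_sum_ones]
        rw [Finset.sum_congr rfl step, Finset.sum_comm]
        exact Finset.sum_congr rfl fun e _ => (Finset.card_filter _ _).symm
      rw [← h1, h2, Finset.sum_congr rfl (fun e _ => hsame e), Finset.sum_const,
        smul_eq_mul, Finset.card_univ]
    -- extract p ∣ Fk.card
    by_cases hc0 : Fk.card = 0
    · simp [hc0]
    have hptdvd : p ^ t ∣ Fk.card * k := by
      have h := hdc
      rw [hcard] at h
      exact ⟨_, h⟩
    have hk0' : k ≠ 0 := hk0.ne'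
    have hkfact : k.factorization p < t := by
      by_contra h
      push_neg at h
      have : p ^ t ∣ k := (Nat.Prime.pow_dvd_iff_le_factorization hp hk0').mpr h
      have := Nat.le_of_dvd hk0 this
      omega
    have hfact : t ≤ (Fk.card * k).factorization p :=
      (Nat.Prime.pow_dvd_iff_le_factorization hp (by positivity)).mp hptdvd
    rw [Nat.factorization_mul hc0 hk0'] at hfact
    have : 1 ≤ (Fk.card).factorization p := by
      have := Finsupp.add_apply (Fk.card).factorization k.factorization p
      omega
    exact (Nat.Prime.dvd_iff_one_le_factorization hp hc0).mpr this
  -- the alternating sum is 1 mod p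
  have hsum : ((p : ℤ)) ∣ (∑ A ∈ F, (-1 : ℤ) ^ A.card) - 1 := by
    have hsplit : (∑ A ∈ F, (-1 : ℤ) ^ A.card)
        = 1 + ∑ A ∈ F.erase ∅, (-1 : ℤ) ^ A.card := by
      rw [← Finset.add_sum_erase _ _ h0]
      simp
    rw [hsplit]
    ring_nf
    have hmaps : ∀ A ∈ F.erase ∅, A.card ∈ Finset.Icc 1 (n - 1) := by
      intro A hA
      rw [Finset.mem_erase] at hA
      have h1 : 0 < A.card := Finset.card_pos.mpr (Finset.nonempty_iff_ne_empty.mpr hA.1)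
      have h2 : A.card ≤ n := Finset.card_le_univ A
      have h3 : A.card ≠ n := by
        intro h
        have hAu : A = Finset.univ := (Finset.card_eq_iff_eq_univ A).mp (by rw [h, hn])
        exact hu (hAu ▸ hA.2)
      rw [Finset.mem_Icc]
      omega
    rw [← Finset.sum_fiberwise_of_maps_to hmaps]
    refine Finset.dvd_sum fun k hk => ?_
    rw [Finset.mem_Icc] at hk
    have hfeq : (F.erase ∅).filter (fun A => A.card = k)
        = F.filter (fun A => A.card = k) := by
      ext A
      simp only [Finset.mem_filter, Finset.mem_erase]
      constructor
      · rintro ⟨⟨_, h⟩, hc⟩; exact ⟨h, hc⟩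
      · rintro ⟨h, hc⟩
        refine ⟨⟨?_, h⟩, hc⟩
        rintro rfl
        rw [Finset.card_empty] at hc
        omega
    have hterm : ∑ A ∈ (F.erase ∅).filter (fun A => A.card = k), (-1 : ℤ) ^ A.card
        = (-1 : ℤ) ^ k * ((F.filter (fun A => A.card = k)).card : ℤ) := by
      rw [hfeq, Finset.sum_congr rfl
        (fun A hA => by rw [(Finset.mem_filter.mp hA).2]), Finset.sum_const,
        nsmul_eq_mul, mul_comm]
    rw [hterm]
    obtain ⟨c, hc⟩ := hdvd k hk.1 (by omega)
    refine ⟨(-1 : ℤ) ^ k * c, ?_⟩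
    rw [hc]
    push_cast
    ring
  -- lower bound: no tree of depth < n decides F
  have hlower : ∀ T : DTree α, Decides F T → n ≤ T.depth := by
    intro T hT
    by_contra h
    push_neg at h
    have hpar := RV.parity T Finset.univ ∅ (by simp) (by simpa [hn] using h)
    have heq : ∀ A ∈ (Finset.univ : Finset α).powerset,
        (-1 : ℤ) ^ A.card * (if T.eval (fun e => decide (e ∈ (∅ : Finset α) ∪ A)) then 1 else 0)
        = (-1 : ℤ) ^ A.card * (if A ∈ F then 1 else 0) := by
      intro A _
      have : (fun e => decide (e ∈ (∅ : Finset α) ∪ A)) = fun e => decide (e ∈ A) := by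
        funext e; simp
      rw [this, hT A]
      simp
    rw [Finset.sum_congr rfl heq] at hpar
    have hsum0 : (∑ A ∈ F, (-1 : ℤ) ^ A.card) = 0 := by
      rw [← hpar]
      have : ∀ A ∈ (Finset.univ : Finset α).powerset,
          (-1 : ℤ) ^ A.card * (if A ∈ F then 1 else 0)
          = if A ∈ F then (-1 : ℤ) ^ A.card else 0 := by
        intro A _
        split <;> simp
      rw [Finset.sum_congr rfl this, ← Finset.sum_filter]
      congr 1
      ext A
      simp
    rw [hsum0] at hsum
    have hd1 : (p : ℤ) ∣ 1 := by
      rw [zero_sub] at hsum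
      exact (dvd_neg).mp hsum
    have : p ∣ 1 := by exact_mod_cast hd1
    have := Nat.le_of_dvd one_pos this
    have := hp.one_lt
    omega
  -- upper bound: the full tree
  have hfull : Decides F (RV.fullTree F Finset.univ.toList ∅) := by
    intro A
    rw [RV.fullTree_eval]
    congr 1
    simp [Finset.filter_true_of_mem (fun x _ => Finset.mem_toList.mpr (Finset.mem_univ x))]
  have hmem : n ∈ {d | ∃ T : DTree α, Decides F T ∧ T.depth = d} := by
    refine ⟨RV.fullTree F Finset.univ.toList ∅, hfull, ?_⟩
    rw [RV.fullTree_depth]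
    simp [hn, Finset.length_toList, Finset.card_univ]
  refine le_antisymm (Nat.sInf_le hmem) ?_
  show n ≤ sInf {d | ∃ T : DTree α, Decides F T ∧ T.depth = d}
  obtain ⟨T, hT, hd⟩ := Nat.sInf_mem (⟨n, hmem⟩ : Set.Nonempty _)
  rw [← hd]
  exact hlower T hT
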